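/- Let K be the attractor of a finite system of contractions on a complete metric space. If K is connected, then for any i, j there exists a chain of indices i_0 = i, ..., i_n = j with S_{i_k}(K) ∩ S_{i_{k+1}}(K) ≠ ∅ for each consecutive pair. -/

import Mathlib

/-- If the attractor `K` of a finite system of contractions is connected, then any two
pieces are joined by a chain of pieces with nonempty consecutive intersections. -/
theorem stmt_1 {X : Type*} [MetricSpace X] [CompleteSpace X] {m : ℕ}
    (S : Fin m → X → X)
    (hS : ∀ i, ∃ r : NNReal, r < 1 ∧ LipschitzWith r (S i))
    (K : Set X) (hKne : K.Nonempty) (hKc : IsCompact K)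
    (hKinv : K = ⋃ i, S i '' K)
    (hconn : IsConnected K) :
    ∀ i j : Fin m, ∃ (n : ℕ) (c : ℕ → Fin m), c 0 = i ∧ c n = j ∧
      ∀ k < n, (S (c k) '' K ∩ S (c (k + 1)) '' K).Nonempty := by
  intro i j
  set A : Fin m → Set X := fun a => S a '' K with hA
  have hAK : ∀ a, A a ⊆ K := by
    intro a
    conv_rhs => rw [hKinv]
    exact Set.subset_iUnion (fun b => S b '' K) a
  have hAc : ∀ a, IsClosed (A a) := by
    intro a
    obtain ⟨r, _, hl⟩ := hS a
    exact (hKc.image hl.continuous).isClosed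
  have hAne : ∀ a, (A a).Nonempty := fun a => hKne.image _
  set E : Fin m → Fin m → Prop := fun a b => (A a ∩ A b).Nonempty with hE
  have key : ∀ b, Relation.ReflTransGen E i b := by
    by_contra h
    push_neg at h
    obtain ⟨b, hb⟩ := h
    set P := {a : Fin m | Relation.ReflTransGen E i a} with hP
    set U := ⋃ a ∈ P, A a with hU
    set V := ⋃ a ∈ Pᶜ, A a with hV
    have hUc : IsClosed U := (Set.toFinite P).isClosed_biUnion (fun a _ => hAc a)
    have hVc : IsClosed V := (Set.toFinite Pᶜ).isClosed_biUnion (fun a _ => hAc a)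
    have hcover : K ⊆ U ∪ V := by
      intro x hx
      rw [hKinv] at hx
      obtain ⟨a, hxa⟩ := Set.mem_iUnion.mp hx
      by_cases ha : a ∈ P
      · exact Or.inl (Set.mem_biUnion ha hxa)
      · exact Or.inr (Set.mem_biUnion ha hxa)
    have hUU : (K ∩ U).Nonempty := by
      obtain ⟨x, hx⟩ := hAne i
      exact ⟨x, hAK i hx, Set.mem_biUnion (Relation.ReflTransGen.refl) hx⟩
    have hVV : (K ∩ V).Nonempty := by
      obtain ⟨x, hx⟩ := hAne b
      exact ⟨x, hAK b hx, Set.mem_biUnion hb hx⟩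
    obtain ⟨x, -, hxU, hxV⟩ :=
      (isPreconnected_closed_iff.mp hconn.isPreconnected) U V hUc hVc hcover hUU hVV
    obtain ⟨a0, ha0, hxa0⟩ := Set.mem_iUnion₂.mp hxU
    obtain ⟨a1, ha1, hxa1⟩ := Set.mem_iUnion₂.mp hxV
    exact ha1 (ha0.tail ⟨x, hxa0, hxa1⟩)
  -- convert ReflTransGen to an explicit chain
  have : ∀ b, Relation.ReflTransGen E i b →
      ∃ (n : ℕ) (c : ℕ → Fin m), c 0 = i ∧ c n = b ∧ ∀ k < n, E (c k) (c (k + 1)) := by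
    intro b hb
    induction hb with
    | refl => exact ⟨0, fun _ => i, rfl, rfl, fun k hk => absurd hk (Nat.not_lt_zero k)⟩
    | @tail b' d hab hbc ih =>
      obtain ⟨n, c, hc0, hcn, hch⟩ := ih
      refine ⟨n + 1, fun k => if k = n + 1 then d else c k, ?_, ?_, ?_⟩
      · simp [hc0]
      · simp
      · intro k hk
        rcases Nat.lt_or_ge k n with h | h
        · have h1 : k ≠ n + 1 := by omega
          have h2 : k + 1 ≠ n + 1 := by omega
          simpa [h1, h2, show k ≠ n by omega] using hch k h
        · have hkn : k = n := by omega
          subst hkn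
          have h1 : k ≠ k + 1 := by omega
          simpa [h1, hcn] using hbc
  exact this j (key j)
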